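/- In any unital associative K-algebra A with elements g,b,c satisfying q²gb − bg = ħ(q+q⁻¹)b; gc − q²cg = −ħ(q+q⁻¹)c; (q²+1)(bc − cb) + (q²−1)g² = ħ(q+q⁻¹)g, the quadratic element σ = −[2]_q⁻¹·([2]_q⁻¹·g² + q⁻¹·bc + q·cb) commutes with each of g, b, c (hence σ is central in the subalgebra generated by g, b, c). -/

import Mathlib

set_option maxHeartbeats 1000000 in
/-- In any unital associative K-algebra with elements `g,b,c` satisfying the
defining relations of SL_{ħ,q}, the quadratic element
`σ = −[2]_q⁻¹·([2]_q⁻¹·g² + q⁻¹·bc + q·cb)` commutes with each of `g, b, c`.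
Here `hb` stands for ħ and `[2]_q = q + q⁻¹`. -/
theorem sigma_central (K : Type*) [Field K] (q hb : K) (hq : q ≠ 0)
    (hq2 : q + q⁻¹ ≠ 0)
    (A : Type*) [Ring A] [Algebra K A] (g b c : A)
    (h1 : (q ^ 2) • (g * b) - b * g = (hb * (q + q⁻¹)) • b)
    (h2 : g * c - (q ^ 2) • (c * g) = -((hb * (q + q⁻¹)) • c))
    (h3 : (q ^ 2 + 1) • (b * c - c * b) + (q ^ 2 - 1) • (g * g) = (hb * (q + q⁻¹)) • g)
    (σ : A)
    (hσ : σ = -((q + q⁻¹)⁻¹ • ((q + q⁻¹)⁻¹ • (g * g) + q⁻¹ • (b * c) + q • (c * b)))) :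
    σ * g = g * σ ∧ σ * b = b * σ ∧ σ * c = c * σ := by
  have hq2sq : (q : K) ^ 2 ≠ 0 := pow_ne_zero _ hq
  have hq21 : (q : K) ^ 2 + 1 ≠ 0 := by
    have h : q ^ 2 + 1 = q * (q + q⁻¹) := by field_simp
    rw [h]; exact mul_ne_zero hq hq2
  have hq21' : (1 : K) + q ^ 2 ≠ 0 := by rw [add_comm]; exact hq21
  set μ : K := hb * (q + q⁻¹) with hμ
  -- a cancellation principle
  have hcanc : ∀ (s : K), s ≠ 0 → ∀ x y : A, s • x = s • y → x = y := by
    intro s hs x y h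
    have := congrArg (fun z => s⁻¹ • z) h
    simpa [inv_smul_smul₀ hs] using this
  -- rearranged relations (all inverse-free where possible)
  have hbg : b * g = (q ^ 2) • (g * b) - μ • b := by rw [← h1]; abel
  have h2' : (q ^ 2) • (c * g) = g * c + μ • c := by
    have h := h2
    rw [sub_eq_iff_eq_add] at h
    rw [h]; abel
  have hcg : c * g = (q ^ 2)⁻¹ • (g * c + μ • c) := by
    rw [← h2', inv_smul_smul₀ hq2sq]
  have hgc : g * c = (q ^ 2) • (c * g) - μ • c := by rw [h2']; abel
  have h3s := h3
  rw [smul_sub] at h3s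
  have h3cb : (q ^ 2 + 1) • (c * b) =
      (q ^ 2 + 1) • (b * c) + (q ^ 2 - 1) • (g * g) - μ • g := by
    rw [← h3s]; abel
  have h3bc : (q ^ 2 + 1) • (b * c) =
      (q ^ 2 + 1) • (c * b) - (q ^ 2 - 1) • (g * g) + μ • g := by
    rw [← h3s]; abel
  -- g commutes with b*c and c*b
  have hbcg : (b * c) * g = g * (b * c) := by
    calc (b * c) * g = b * (c * g) := by rw [mul_assoc]
      _ = (q ^ 2)⁻¹ • ((b * g) * c + μ • (b * c)) := by
          rw [hcg, mul_smul_comm, mul_add, mul_smul_comm, ← mul_assoc]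
      _ = (q ^ 2)⁻¹ • (((q ^ 2) • (g * b) - μ • b) * c + μ • (b * c)) := by rw [hbg]
      _ = g * (b * c) := by
          simp only [sub_mul, smul_mul_assoc, smul_sub, smul_add, smul_smul, mul_assoc]
          match_scalars <;> field_simp <;> ring
  have hcbg : (c * b) * g = g * (c * b) := by
    calc (c * b) * g = c * (b * g) := by rw [mul_assoc]
      _ = (q ^ 2) • ((c * g) * b) - μ • (c * b) := by
          rw [hbg, mul_sub, mul_smul_comm, mul_smul_comm, ← mul_assoc]
      _ = (q ^ 2) • (((q ^ 2)⁻¹ • (g * c + μ • c)) * b) - μ • (c * b) := by rw [hcg]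
      _ = g * (c * b) := by
          simp only [smul_mul_assoc, add_mul, smul_add, smul_smul, smul_mul_assoc, mul_assoc]
          match_scalars <;> field_simp <;> ring
  -- monomial reductions for the b-commutation (inverse-free)
  have E2 : b * (g * g) = (q ^ 2 * q ^ 2) • (g * (g * b))
      - (2 * q ^ 2 * μ) • (g * b) + (μ * μ) • b := by
    calc b * (g * g) = (b * g) * g := by rw [mul_assoc]
      _ = ((q ^ 2) • (g * b) - μ • b) * g := by rw [hbg]
      _ = (q ^ 2) • (g * (b * g)) - μ • (b * g) := by
          simp only [sub_mul, smul_mul_assoc, mul_assoc]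
      _ = (q ^ 2) • (g * ((q ^ 2) • (g * b) - μ • b))
          - μ • ((q ^ 2) • (g * b) - μ • b) := by rw [hbg]
      _ = _ := by
          simp only [mul_sub, mul_smul_comm, smul_sub, smul_smul]
          module
  have E3 : (q ^ 2 + 1) • (c * (b * b)) = (q ^ 2 + 1) • (b * (c * b))
      + (q ^ 2 - 1) • (g * (g * b)) - μ • (g * b) := by
    calc (q ^ 2 + 1) • (c * (b * b)) = ((q ^ 2 + 1) • (c * b)) * b := by
          rw [smul_mul_assoc, mul_assoc]
      _ = ((q ^ 2 + 1) • (b * c) + (q ^ 2 - 1) • (g * g) - μ • g) * b := by rw [h3cb]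
      _ = _ := by simp only [add_mul, sub_mul, smul_mul_assoc, mul_assoc]
  have E4 : (q ^ 2 + 1) • (b * (c * b)) = (q ^ 2 + 1) • (b * (b * c))
      + (q ^ 2 - 1) • (b * (g * g)) - μ • (b * g) := by
    calc (q ^ 2 + 1) • (b * (c * b)) = b * ((q ^ 2 + 1) • (c * b)) := by
          rw [mul_smul_comm]
      _ = b * ((q ^ 2 + 1) • (b * c) + (q ^ 2 - 1) • (g * g) - μ • g) := by rw [h3cb]
      _ = _ := by simp only [mul_add, mul_sub, mul_smul_comm]
  -- monomial reductions for the c-commutation (inverse-free)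
  have F2 : g * (g * c) = (q ^ 2 * q ^ 2) • (c * (g * g))
      - (2 * q ^ 2 * μ) • (c * g) + (μ * μ) • c := by
    calc g * (g * c) = g * ((q ^ 2) • (c * g) - μ • c) := by rw [hgc]
      _ = (q ^ 2) • ((g * c) * g) - μ • (g * c) := by
          simp only [mul_sub, mul_smul_comm, ← mul_assoc]
      _ = (q ^ 2) • (((q ^ 2) • (c * g) - μ • c) * g)
          - μ • ((q ^ 2) • (c * g) - μ • c) := by rw [hgc]
      _ = _ := by
          simp only [sub_mul, smul_mul_assoc, smul_sub, smul_smul, mul_assoc]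
          module
  have F3 : (q ^ 2 + 1) • (b * (c * c)) = (q ^ 2 + 1) • (c * (b * c))
      - (q ^ 2 - 1) • (g * (g * c)) + μ • (g * c) := by
    calc (q ^ 2 + 1) • (b * (c * c)) = ((q ^ 2 + 1) • (b * c)) * c := by
          rw [smul_mul_assoc, mul_assoc]
      _ = ((q ^ 2 + 1) • (c * b) - (q ^ 2 - 1) • (g * g) + μ • g) * c := by rw [h3bc]
      _ = _ := by simp only [add_mul, sub_mul, smul_mul_assoc, mul_assoc]
  have F4 : (q ^ 2 + 1) • (c * (b * c)) = (q ^ 2 + 1) • (c * (c * b))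
      - (q ^ 2 - 1) • (c * (g * g)) + μ • (c * g) := by
    calc (q ^ 2 + 1) • (c * (b * c)) = c * ((q ^ 2 + 1) • (b * c)) := by
          rw [mul_smul_comm]
      _ = c * ((q ^ 2 + 1) • (c * b) - (q ^ 2 - 1) • (g * g) + μ • g) := by rw [h3bc]
      _ = _ := by simp only [mul_add, mul_sub, mul_smul_comm]
  -- the rescaled inner element, inverse-free
  have hsne : (q * (q ^ 2 + 1) * (q ^ 2 + 1) * (q ^ 2 + 1) : K) ≠ 0 :=
    mul_ne_zero (mul_ne_zero (mul_ne_zero hq hq21) hq21) hq21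
  have hs : (q * (q ^ 2 + 1) * (q ^ 2 + 1) * (q ^ 2 + 1)) •
        ((q + q⁻¹)⁻¹ • (g * g) + q⁻¹ • (b * c) + q • (c * b))
      = (q ^ 2 * (q ^ 2 + 1) * (q ^ 2 + 1)) • (g * g)
        + ((q ^ 2 + 1) * (q ^ 2 + 1) * (q ^ 2 + 1)) • (b * c)
        + (q ^ 2 * (q ^ 2 + 1) * (q ^ 2 + 1) * (q ^ 2 + 1)) • (c * b) := by
    simp only [smul_add, smul_smul]
    match_scalars
    · linear_combination (q ^ 2 * (q ^ 2 + 1) ^ 2) * (mul_inv_cancel₀ hq2)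
        - (q * (q ^ 2 + 1) ^ 2 * (q + q⁻¹)⁻¹) * (mul_inv_cancel₀ hq)
    · linear_combination ((q ^ 2 + 1) ^ 3) * (mul_inv_cancel₀ hq)
    · ring
  -- the key commutation identities for the inner element
  have keyg : ((q + q⁻¹)⁻¹ • (g * g) + q⁻¹ • (b * c) + q • (c * b)) * g
      = g * ((q + q⁻¹)⁻¹ • (g * g) + q⁻¹ • (b * c) + q • (c * b)) := by
    simp only [add_mul, mul_add, smul_mul_assoc, mul_smul_comm, hbcg, hcbg, mul_assoc]
  have keyb : ((q + q⁻¹)⁻¹ • (g * g) + q⁻¹ • (b * c) + q • (c * b)) * b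
      = b * ((q + q⁻¹)⁻¹ • (g * g) + q⁻¹ • (b * c) + q • (c * b)) := by
    apply hcanc _ hsne
    calc (q * (q ^ 2 + 1) * (q ^ 2 + 1) * (q ^ 2 + 1)) •
          (((q + q⁻¹)⁻¹ • (g * g) + q⁻¹ • (b * c) + q • (c * b)) * b)
        = ((q * (q ^ 2 + 1) * (q ^ 2 + 1) * (q ^ 2 + 1)) •
            ((q + q⁻¹)⁻¹ • (g * g) + q⁻¹ • (b * c) + q • (c * b))) * b := by
          rw [smul_mul_assoc]
      _ = ((q ^ 2 * (q ^ 2 + 1) * (q ^ 2 + 1)) • (g * g)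
            + ((q ^ 2 + 1) * (q ^ 2 + 1) * (q ^ 2 + 1)) • (b * c)
            + (q ^ 2 * (q ^ 2 + 1) * (q ^ 2 + 1) * (q ^ 2 + 1)) • (c * b)) * b := by
          rw [hs]
      _ = b * ((q ^ 2 * (q ^ 2 + 1) * (q ^ 2 + 1)) • (g * g)
            + ((q ^ 2 + 1) * (q ^ 2 + 1) * (q ^ 2 + 1)) • (b * c)
            + (q ^ 2 * (q ^ 2 + 1) * (q ^ 2 + 1) * (q ^ 2 + 1)) • (c * b)) := by
          simp only [add_mul, mul_add, smul_mul_assoc, mul_smul_comm, mul_assoc]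
          linear_combination (norm := module)
            (q ^ 2 * (q ^ 2 + 1) * (q ^ 2 + 1)) • E3
            + ((q ^ 2 + 1) * (q ^ 2 + 1)) • E4
            - ((q ^ 2 + 1) * (q ^ 2 + 1)) • E2
            - ((q ^ 2 + 1) * (q ^ 2 + 1) * μ) • hbg
      _ = b * ((q * (q ^ 2 + 1) * (q ^ 2 + 1) * (q ^ 2 + 1)) •
            ((q + q⁻¹)⁻¹ • (g * g) + q⁻¹ • (b * c) + q • (c * b))) := by
          rw [hs]
      _ = (q * (q ^ 2 + 1) * (q ^ 2 + 1) * (q ^ 2 + 1)) •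
          (b * ((q + q⁻¹)⁻¹ • (g * g) + q⁻¹ • (b * c) + q • (c * b))) := by
          rw [mul_smul_comm]
  have keyc : ((q + q⁻¹)⁻¹ • (g * g) + q⁻¹ • (b * c) + q • (c * b)) * c
      = c * ((q + q⁻¹)⁻¹ • (g * g) + q⁻¹ • (b * c) + q • (c * b)) := by
    apply hcanc _ hsne
    calc (q * (q ^ 2 + 1) * (q ^ 2 + 1) * (q ^ 2 + 1)) •
          (((q + q⁻¹)⁻¹ • (g * g) + q⁻¹ • (b * c) + q • (c * b)) * c)
        = ((q * (q ^ 2 + 1) * (q ^ 2 + 1) * (q ^ 2 + 1)) •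
            ((q + q⁻¹)⁻¹ • (g * g) + q⁻¹ • (b * c) + q • (c * b))) * c := by
          rw [smul_mul_assoc]
      _ = ((q ^ 2 * (q ^ 2 + 1) * (q ^ 2 + 1)) • (g * g)
            + ((q ^ 2 + 1) * (q ^ 2 + 1) * (q ^ 2 + 1)) • (b * c)
            + (q ^ 2 * (q ^ 2 + 1) * (q ^ 2 + 1) * (q ^ 2 + 1)) • (c * b)) * c := by
          rw [hs]
      _ = c * ((q ^ 2 * (q ^ 2 + 1) * (q ^ 2 + 1)) • (g * g)
            + ((q ^ 2 + 1) * (q ^ 2 + 1) * (q ^ 2 + 1)) • (b * c)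
            + (q ^ 2 * (q ^ 2 + 1) * (q ^ 2 + 1) * (q ^ 2 + 1)) • (c * b)) := by
          simp only [add_mul, mul_add, smul_mul_assoc, mul_smul_comm, mul_assoc]
          linear_combination (norm := module)
            ((q ^ 2 + 1) * (q ^ 2 + 1)) • F3
            + (q ^ 2 * (q ^ 2 + 1) * (q ^ 2 + 1)) • F4
            + ((q ^ 2 + 1) * (q ^ 2 + 1)) • F2
            + ((q ^ 2 + 1) * (q ^ 2 + 1) * μ) • hgc
      _ = c * ((q * (q ^ 2 + 1) * (q ^ 2 + 1) * (q ^ 2 + 1)) •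
            ((q + q⁻¹)⁻¹ • (g * g) + q⁻¹ • (b * c) + q • (c * b))) := by
          rw [hs]
      _ = (q * (q ^ 2 + 1) * (q ^ 2 + 1) * (q ^ 2 + 1)) •
          (c * ((q + q⁻¹)⁻¹ • (g * g) + q⁻¹ • (b * c) + q • (c * b))) := by
          rw [mul_smul_comm]
  subst hσ
  refine ⟨?_, ?_, ?_⟩ <;>
    rw [neg_mul, mul_neg, neg_inj, smul_mul_assoc, mul_smul_comm]
  · rw [keyg]
  · rw [keyb]
  · rw [keyc]
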